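/- Let L be the operator on smooth functions of one real variable defined by (Lf)(ρ) = −f′(ρ)/sinh(ρ), and for t > 0 let F_t(ρ) = exp(−ρ²/(2t)). For every n ∈ ℕ and every t > 0, the ratio (t·sinh(ρ) · Lⁿ⁺¹(F_t)(ρ)) / (ρ · Lⁿ(F_t)(ρ)) tends to 1 as ρ → +∞. -/

import Mathlib

open Real Filter

namespace GaussRatio

abbrev Mono := ℝ × ℕ × ℤ

noncomputable def evalM (m : Mono) (ρ : ℝ) : ℝ := m.1 * ρ ^ m.2.1 * Real.exp (m.2.2 * ρ)

noncomputable def evalL (l : List Mono) (ρ : ℝ) : ℝ := (l.map (fun m => evalM m ρ)).sum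

def smulL (r : ℝ) (l : List Mono) : List Mono := l.map (fun m => (r * m.1, m.2))
def mulExp (j : ℤ) (l : List Mono) : List Mono := l.map (fun m => (m.1, m.2.1, m.2.2 + j))
def mulX (l : List Mono) : List Mono := l.map (fun m => (m.1, m.2.1 + 1, m.2.2))
def Dl (l : List Mono) : List Mono :=
  l.flatMap (fun m => [(m.1 * m.2.1, m.2.1 - 1, m.2.2), (m.1 * m.2.2, m.2)])
noncomputable def mulSinh (l : List Mono) : List Mono :=
  smulL (1/2) (mulExp 1 l) ++ smulL (-(1/2)) (mulExp (-1) l)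
noncomputable def mulCosh (l : List Mono) : List Mono :=
  smulL (1/2) (mulExp 1 l) ++ smulL (1/2) (mulExp (-1) l)
noncomputable def step (n : ℕ) (t : ℝ) (l : List Mono) : List Mono :=
  mulSinh (mulX (smulL t⁻¹ l)) ++ smulL (-1) (mulSinh (Dl l)) ++ smulL (2*n) (mulCosh l)

@[simp] lemma evalL_nil (ρ : ℝ) : evalL [] ρ = 0 := rfl
@[simp] lemma evalL_cons (m : Mono) (l : List Mono) (ρ : ℝ) :
    evalL (m :: l) ρ = evalM m ρ + evalL l ρ := rfl

lemma evalL_append (l₁ l₂ : List Mono) (ρ : ℝ) :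
    evalL (l₁ ++ l₂) ρ = evalL l₁ ρ + evalL l₂ ρ := by
  induction l₁ with
  | nil => simp
  | cons m l ih => simp [ih]; ring

lemma evalL_smul (r : ℝ) (l : List Mono) (ρ : ℝ) :
    evalL (smulL r l) ρ = r * evalL l ρ := by
  induction l with
  | nil => simp [smulL]
  | cons m l ih => simp [smulL, evalM] at *; rw [ih]; ring

lemma evalL_mulExp (j : ℤ) (l : List Mono) (ρ : ℝ) :
    evalL (mulExp j l) ρ = Real.exp (j * ρ) * evalL l ρ := by
  induction l with
  | nil => simp [mulExp]
  | cons m l ih =>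
      simp [mulExp, evalM] at *
      rw [ih]
      push_cast
      rw [add_mul, Real.exp_add]
      ring

lemma evalL_mulX (l : List Mono) (ρ : ℝ) :
    evalL (mulX l) ρ = ρ * evalL l ρ := by
  induction l with
  | nil => simp [mulX]
  | cons m l ih => simp [mulX, evalM] at *; rw [ih]; ring

lemma evalL_mulSinh (l : List Mono) (ρ : ℝ) :
    evalL (mulSinh l) ρ = Real.sinh ρ * evalL l ρ := by
  rw [mulSinh, evalL_append, evalL_smul, evalL_smul, evalL_mulExp, evalL_mulExp,
    Real.sinh_eq]
  push_cast
  ring_nf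

lemma evalL_mulCosh (l : List Mono) (ρ : ℝ) :
    evalL (mulCosh l) ρ = Real.cosh ρ * evalL l ρ := by
  rw [mulCosh, evalL_append, evalL_smul, evalL_smul, evalL_mulExp, evalL_mulExp,
    Real.cosh_eq]
  push_cast
  ring_nf

lemma hasDerivAt_evalL (l : List Mono) (ρ : ℝ) :
    HasDerivAt (fun x => evalL l x) (evalL (Dl l) ρ) ρ := by
  induction l with
  | nil => simpa [evalL, Dl] using (hasDerivAt_const ρ (0:ℝ))
  | cons m l ih =>
      have hm : HasDerivAt (fun x => evalM m x)
          (m.1 * (m.2.1 * ρ ^ (m.2.1 - 1)) * Real.exp (m.2.2 * ρ)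
            + m.1 * ρ ^ m.2.1 * (m.2.2 * Real.exp (m.2.2 * ρ))) ρ := by
        have h1 : HasDerivAt (fun x : ℝ => m.1 * x ^ m.2.1)
            (m.1 * (m.2.1 * ρ ^ (m.2.1 - 1))) ρ := (hasDerivAt_pow m.2.1 ρ).const_mul m.1
        have h2 : HasDerivAt (fun x : ℝ => Real.exp (m.2.2 * x))
            ((m.2.2 : ℝ) * Real.exp (m.2.2 * ρ)) ρ := by
          simpa [mul_comm] using (((hasDerivAt_id ρ).const_mul (m.2.2 : ℝ)).exp)
        simpa [evalM, Pi.mul_def] using h1.mul h2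
      have := hm.add ih
      have heq : evalL (Dl (m :: l)) ρ =
          (m.1 * (m.2.1 * ρ ^ (m.2.1 - 1)) * Real.exp (m.2.2 * ρ)
            + m.1 * ρ ^ m.2.1 * (m.2.2 * Real.exp (m.2.2 * ρ))) + evalL (Dl l) ρ := by
        simp [Dl, evalM]
        ring
      rw [heq]
      exact this

lemma evalL_step (n : ℕ) (t : ℝ) (l : List Mono) (ρ : ℝ) :
    evalL (step n t l) ρ =
      Real.sinh ρ * (t⁻¹ * ρ * evalL l ρ - evalL (Dl l) ρ)
        + 2 * n * Real.cosh ρ * evalL l ρ := by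
  rw [step, evalL_append, evalL_append, evalL_mulSinh, evalL_mulX, evalL_smul,
    evalL_smul, evalL_mulSinh, evalL_smul, evalL_mulCosh]
  ring

def Lo (n : ℕ) (p : ℕ × ℤ) : Prop := p.2 < (n : ℤ) ∨ (p.2 = (n : ℤ) ∧ p.1 < n)
def Ok (n : ℕ) (p : ℕ × ℤ) : Prop := p.2 ≤ (n : ℤ) ∧ (p.2 = (n : ℤ) → p.1 ≤ n)

lemma ok_of_lo {n : ℕ} {p : ℕ × ℤ} (h : Lo n p) : Ok n p := by
  rcases h with h | ⟨h1, h2⟩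
  · exact ⟨le_of_lt h, fun he => absurd he (by omega)⟩
  · exact ⟨le_of_eq h1, fun _ => le_of_lt h2⟩

lemma forall_smulL {P : ℕ × ℤ → Prop} {l : List Mono} {r : ℝ}
    (h : ∀ m ∈ l, P m.2) : ∀ m ∈ smulL r l, P m.2 := by
  intro m hm
  rcases List.mem_map.1 hm with ⟨m', hm', rfl⟩
  exact h m' hm'

lemma ok_Dl {n : ℕ} {l : List Mono} (h : ∀ m ∈ l, Ok n m.2) :
    ∀ m ∈ Dl l, Ok n m.2 := by
  intro m hm
  rcases List.mem_flatMap.1 hm with ⟨m', hm', hmem⟩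
  have := h m' hm'
  simp only [List.mem_cons, List.mem_singleton] at hmem
  rcases hmem with rfl | rfl | h'
  · exact ⟨this.1, fun he => le_trans (Nat.sub_le _ _) (this.2 he)⟩
  · exact this
  · exact absurd h' List.not_mem_nil

lemma lo_mulExp_up {n : ℕ} {l : List Mono} (h : ∀ m ∈ l, Ok n m.2) :
    ∀ m ∈ mulExp 1 l, Lo (n + 1) m.2 := by
  intro m hm
  rcases List.mem_map.1 hm with ⟨m', hm', rfl⟩
  obtain ⟨h1, h2⟩ := h m' hm'
  dsimp only [Lo]
  by_cases he : m'.2.2 = (n : ℤ)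
  · exact Or.inr ⟨by push_cast; omega, Nat.lt_succ_of_le (h2 he)⟩
  · exact Or.inl (by push_cast; omega)

lemma lo_mulExp_down {n : ℕ} {l : List Mono} (h : ∀ m ∈ l, m.2.2 ≤ (n : ℤ)) :
    ∀ m ∈ mulExp (-1) l, Lo (n + 1) m.2 := by
  intro m hm
  rcases List.mem_map.1 hm with ⟨m', hm', rfl⟩
  exact Or.inl (by have := h m' hm'; push_cast; omega)

lemma lo_mulSinh {n : ℕ} {l : List Mono} (h : ∀ m ∈ l, Ok n m.2) :
    ∀ m ∈ mulSinh l, Lo (n + 1) m.2 := by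
  intro m hm
  rcases List.mem_append.1 hm with hm | hm
  · exact forall_smulL (lo_mulExp_up h) m hm
  · exact forall_smulL (lo_mulExp_down (fun m hm => (h m hm).1)) m hm

lemma lo_mulCosh {n : ℕ} {l : List Mono} (h : ∀ m ∈ l, Ok n m.2) :
    ∀ m ∈ mulCosh l, Lo (n + 1) m.2 := by
  intro m hm
  rcases List.mem_append.1 hm with hm | hm
  · exact forall_smulL (lo_mulExp_up h) m hm
  · exact forall_smulL (lo_mulExp_down (fun m hm => (h m hm).1)) m hm

lemma ok_mulX_of_lo {n : ℕ} {l : List Mono} (h : ∀ m ∈ l, Lo n m.2) :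
    ∀ m ∈ mulX l, Ok n m.2 := by
  intro m hm
  rcases List.mem_map.1 hm with ⟨m', hm', rfl⟩
  rcases h m' hm' with h' | ⟨h1, h2⟩
  · exact ⟨by dsimp; omega, fun he => absurd he (by dsimp at *; omega)⟩
  · exact ⟨le_of_eq h1, fun _ => by dsimp at *; omega⟩

/-- The tail list in the decomposition of `step n t ((c,n,n) :: r)`. -/
noncomputable def Tl (n : ℕ) (t c : ℝ) (r : List Mono) : List Mono :=
  (-(2⁻¹ * (t⁻¹ * c)), n + 1, (n : ℤ) - 1) ::
    (mulSinh (mulX (smulL t⁻¹ r)) ++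
      smulL (-1) (mulSinh (Dl ((c, n, (n : ℤ)) :: r))) ++
      smulL (2 * n) (mulCosh ((c, n, (n : ℤ)) :: r)))

lemma lo_Tl {n : ℕ} {t c : ℝ} {r : List Mono} (h : ∀ m ∈ r, Lo n m.2) :
    ∀ m ∈ Tl n t c r, Lo (n + 1) m.2 := by
  have hok : ∀ m ∈ ((c, n, (n : ℤ)) :: r), Ok n m.2 := by
    intro m hm
    rcases List.mem_cons.1 hm with rfl | hm
    · exact ⟨le_refl _, fun _ => le_refl _⟩
    · exact ok_of_lo (h m hm)
  intro m hm
  rcases List.mem_cons.1 hm with rfl | hm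
  · exact Or.inl (by push_cast; omega)
  rcases List.mem_append.1 hm with hm | hm
  · rcases List.mem_append.1 hm with hm | hm
    · exact lo_mulSinh (ok_mulX_of_lo (fun m hm => forall_smulL h m hm)) m hm
    · exact forall_smulL (lo_mulSinh (ok_Dl hok)) m hm
  · exact forall_smulL (lo_mulCosh hok) m hm

lemma evalL_step_cons (n : ℕ) (t c : ℝ) (r : List Mono) (ρ : ℝ) :
    evalL (step n t ((c, n, (n : ℤ)) :: r)) ρ =
      2⁻¹ * (t⁻¹ * c) * ρ ^ (n + 1) * Real.exp (((n : ℝ) + 1) * ρ)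
        + evalL (Tl n t c r) ρ := by
  have hDl : evalL (Dl ((c, n, (n : ℤ)) :: r)) ρ =
      evalM (c * n, n - 1, (n : ℤ)) ρ + evalM (c * n, n, (n : ℤ)) ρ + evalL (Dl r) ρ := by
    simp [Dl, evalM]; ring
  have hu : Real.exp (((n : ℝ) + 1) * ρ) = Real.exp ((n : ℝ) * ρ) * Real.exp ρ := by
    rw [← Real.exp_add]; ring_nf
  have hd : Real.exp (((n : ℝ) - 1) * ρ) = Real.exp ((n : ℝ) * ρ) * Real.exp (-ρ) := by
    rw [← Real.exp_add]; ring_nf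
  simp only [evalL_step, Tl, evalL_cons, evalL_append, evalL_mulSinh,
    evalL_mulX, evalL_smul, evalL_mulCosh, hDl]
  simp only [evalM, Real.sinh_eq, Real.cosh_eq]
  push_cast
  rw [hu, hd]
  ring

set_option maxHeartbeats 1000000 in
lemma tendsto_mono_div (c : ℝ) (k n : ℕ) (a : ℤ)
    (h : a < (n : ℤ) ∨ (a = (n : ℤ) ∧ k < n)) :
    Tendsto (fun ρ : ℝ => (c * ρ ^ k * Real.exp (a * ρ)) / (ρ ^ n * Real.exp (n * ρ)))
      atTop (nhds 0) := by
  rcases h with h | ⟨rfl, hk⟩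
  · -- exponential decay case
    have hb : (a : ℝ) - n ≤ -1 := by
      have h' : a ≤ (n : ℤ) - 1 := by omega
      have h'' : (a : ℝ) ≤ ((n : ℤ) - 1 : ℤ) := Int.cast_le.2 h'
      push_cast at h''
      linarith
    have hlim : Tendsto (fun ρ : ℝ => |c| * (ρ ^ k * Real.exp (-ρ))) atTop (nhds 0) := by
      simpa using (tendsto_pow_mul_exp_neg_atTop_nhds_zero k).const_mul |c|
    refine squeeze_zero_norm' ?_ hlim
    filter_upwards [eventually_ge_atTop (1 : ℝ)] with ρ hρ
    have hρ0 : (0:ℝ) < ρ := lt_of_lt_of_le one_pos hρ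
    have hpow : (1:ℝ) ≤ ρ ^ n := one_le_pow₀ hρ
    have hD : (0:ℝ) < ρ ^ n * Real.exp ((n:ℕ) * ρ) := by positivity
    have key : ρ ^ k * Real.exp ((a:ℤ) * ρ)
        ≤ (ρ ^ k * Real.exp (-ρ)) * (ρ ^ n * Real.exp ((n:ℕ) * ρ)) := by
      have h3 : Real.exp ((a:ℤ) * ρ) ≤ Real.exp (-ρ) * Real.exp ((n:ℕ) * ρ) := by
        rw [← Real.exp_add]
        apply Real.exp_le_exp.2
        push_cast
        nlinarith
      have hk0 : (0:ℝ) < ρ ^ k := pow_pos hρ0 k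
      have h4 : (0:ℝ) ≤ ρ ^ k * Real.exp (-ρ) * Real.exp ((n:ℕ) * ρ) := by positivity
      nlinarith [mul_le_mul_of_nonneg_left h3 hk0.le, mul_le_mul_of_nonneg_left hpow h4]
    have habs : ‖c * ρ ^ k * Real.exp ((a:ℤ) * ρ) / (ρ ^ n * Real.exp ((n:ℕ) * ρ))‖
        = |c| * (ρ ^ k * Real.exp ((a:ℤ) * ρ) / (ρ ^ n * Real.exp ((n:ℕ) * ρ))) := by
      rw [norm_eq_abs, abs_div, abs_of_pos hD, abs_mul, abs_mul,
        abs_of_pos (pow_pos hρ0 k), abs_of_pos (Real.exp_pos _)]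
      ring
    rw [habs]
    exact mul_le_mul_of_nonneg_left ((div_le_iff₀ hD).2 key) (abs_nonneg c)
  · -- same exponent, lower power case
    have hlim : Tendsto (fun ρ : ℝ => c * (ρ ^ (n - k))⁻¹) atTop (nhds 0) := by
      simpa using ((tendsto_pow_atTop (n := n - k) (by omega)).inv_tendsto_atTop).const_mul c
    refine hlim.congr' ?_
    filter_upwards [eventually_gt_atTop (0 : ℝ)] with ρ hρ
    have h1 : ρ ^ n = ρ ^ k * ρ ^ (n - k) := by
      rw [← pow_add]
      congr 1
      omega
    have h2 : Real.exp (((n:ℤ):ℝ) * ρ) = Real.exp (((n:ℕ):ℝ) * ρ) := by push_cast; ring_nf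
    rw [h2, h1]
    have hek : Real.exp (((n:ℕ):ℝ) * ρ) ≠ 0 := Real.exp_ne_zero _
    have hρk : ρ ^ k ≠ 0 := pow_ne_zero _ (ne_of_gt hρ)
    have hρnk : ρ ^ (n - k) ≠ 0 := pow_ne_zero _ (ne_of_gt hρ)
    field_simp

lemma tendsto_sinh_exp_neg : Tendsto (fun ρ : ℝ => Real.sinh ρ * Real.exp (-ρ))
    atTop (nhds (1/2)) := by
  have hcomp : Tendsto (fun ρ : ℝ => -(2*ρ)) atTop atBot := by
    have h1 : Tendsto (fun ρ : ℝ => 2*ρ) atTop atTop :=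
      (tendsto_const_mul_atTop_of_pos (by norm_num : (0:ℝ) < 2)).2 tendsto_id
    exact tendsto_neg_atTop_atBot.comp h1
  have h2 : Tendsto (fun ρ : ℝ => Real.exp (-(2*ρ))) atTop (nhds 0) :=
    Real.tendsto_exp_comp_nhds_zero.2 hcomp
  have heq : ∀ ρ : ℝ, Real.sinh ρ * Real.exp (-ρ) = (1 - Real.exp (-(2*ρ))) / 2 := by
    intro ρ
    rw [Real.sinh_eq]
    have e1 : Real.exp ρ * Real.exp (-ρ) = 1 := by rw [← Real.exp_add]; simp
    have e2 : Real.exp (-ρ) * Real.exp (-ρ) = Real.exp (-(2*ρ)) := by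
      rw [← Real.exp_add]; ring_nf
    nlinarith [e1, e2]
  simp only [heq]
  have := (tendsto_const_nhds (x := (1:ℝ)) (f := atTop (α := ℝ))).sub h2
  simpa using this.div_const 2

noncomputable def Fg (t : ℝ) : ℝ → ℝ := fun ρ : ℝ => Real.exp (-ρ ^ 2 / (2 * t))
noncomputable def Lop : (ℝ → ℝ) → ℝ → ℝ := fun f : ℝ → ℝ => fun ρ : ℝ => -(deriv f ρ) / Real.sinh ρ

lemma hasDerivAt_Fg (t : ℝ) (ht : t ≠ 0) (ρ : ℝ) :
    HasDerivAt (Fg t) (-(ρ / t) * Fg t ρ) ρ := by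
  have h1 : HasDerivAt (fun x : ℝ => -x ^ 2 / (2 * t))
      (-((2:ℕ) * ρ ^ (2-1)) / (2 * t)) ρ := ((hasDerivAt_pow 2 ρ).neg).div_const (2 * t)
  have h2 : HasDerivAt (Fg t) _ ρ := h1.exp
  convert h2 using 1
  show -(ρ / t) * Real.exp (-ρ ^ 2 / (2 * t)) = _
  push_cast
  field_simp

set_option maxHeartbeats 1000000 in
lemma rep (t : ℝ) (ht : 0 < t) (n : ℕ) :
    ∃ r : List Mono, (∀ m ∈ r, Lo n m.2) ∧ ∀ ρ : ℝ, 0 < ρ →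
      Lop^[n] (Fg t) ρ =
        evalL (((2 * t)⁻¹ ^ n, n, (n : ℤ)) :: r) ρ * Fg t ρ / Real.sinh ρ ^ (2 * n) := by
  induction n with
  | zero =>
      refine ⟨[], by simp, fun ρ hρ => ?_⟩
      simp [evalM, Fg]
  | succ n ih =>
      obtain ⟨r, hr, hF⟩ := ih
      set c : ℝ := (2 * t)⁻¹ ^ n with hc
      refine ⟨Tl n t c r, lo_Tl hr, fun ρ hρ => ?_⟩
      have hsρ : Real.sinh ρ ≠ 0 := ne_of_gt (by positivity)
      have hS : HasDerivAt (fun x => evalL ((c, n, (n : ℤ)) :: r) x)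
          (evalL (Dl ((c, n, (n : ℤ)) :: r)) ρ) ρ := hasDerivAt_evalL _ ρ
      have hFd : HasDerivAt (Fg t) (-(ρ / t) * Fg t ρ) ρ := hasDerivAt_Fg t ht.ne' ρ
      have hsinh : HasDerivAt (fun x => Real.sinh x ^ (2*n))
          (((2*n : ℕ) : ℝ) * Real.sinh ρ ^ (2*n - 1) * Real.cosh ρ) ρ :=
        (Real.hasDerivAt_sinh ρ).pow (2*n)
      have hG : HasDerivAt (fun x => evalL ((c, n, (n : ℤ)) :: r) x * Fg t x / Real.sinh x ^ (2*n))
          (((evalL (Dl ((c, n, (n : ℤ)) :: r)) ρ * Fg t ρ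
              + evalL ((c, n, (n : ℤ)) :: r) ρ * (-(ρ / t) * Fg t ρ)) * Real.sinh ρ ^ (2*n)
            - evalL ((c, n, (n : ℤ)) :: r) ρ * Fg t ρ
              * (((2*n : ℕ) : ℝ) * Real.sinh ρ ^ (2*n - 1) * Real.cosh ρ))
            / (Real.sinh ρ ^ (2*n)) ^ 2) ρ :=
        (hS.mul hFd).div hsinh (pow_ne_zero _ hsρ)
      have hev : Lop^[n] (Fg t) =ᶠ[nhds ρ]
          fun x => evalL ((c, n, (n : ℤ)) :: r) x * Fg t x / Real.sinh x ^ (2*n) := by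
        filter_upwards [isOpen_Ioi.mem_nhds hρ] with x hx using hF x hx
      have hd : deriv (Lop^[n] (Fg t)) ρ =
          ((evalL (Dl ((c, n, (n : ℤ)) :: r)) ρ * Fg t ρ
              + evalL ((c, n, (n : ℤ)) :: r) ρ * (-(ρ / t) * Fg t ρ)) * Real.sinh ρ ^ (2*n)
            - evalL ((c, n, (n : ℤ)) :: r) ρ * Fg t ρ
              * (((2*n : ℕ) : ℝ) * Real.sinh ρ ^ (2*n - 1) * Real.cosh ρ))
            / (Real.sinh ρ ^ (2*n)) ^ 2 := by
        rw [hev.deriv_eq]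
        exact hG.deriv
      rw [Function.iterate_succ_apply']
      show -(deriv (Lop^[n] (Fg t)) ρ) / Real.sinh ρ = _
      rw [hd]
      have hhead : evalL (((2 * t)⁻¹ ^ (n+1), n+1, ((n+1 : ℕ) : ℤ)) :: Tl n t c r) ρ
          = evalL (step n t ((c, n, (n : ℤ)) :: r)) ρ := by
        rw [evalL_cons, evalL_step_cons]
        have hcoef : (2 * t)⁻¹ ^ (n + 1) = 2⁻¹ * (t⁻¹ * c) := by
          rw [hc, pow_succ, mul_inv]; ring
        unfold evalM
        rw [hcoef]
        push_cast
        ring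
      rw [hhead, evalL_step]
      have hred : ((2*n : ℕ) : ℝ) * Real.sinh ρ ^ (2*n - 1) * Real.cosh ρ
          = ((2*n : ℕ) : ℝ) * Real.cosh ρ * Real.sinh ρ ^ (2*n) / Real.sinh ρ := by
        rcases Nat.eq_zero_or_pos n with h0 | hpos
        · simp [h0]
        · have hps : Real.sinh ρ ^ (2*n - 1) * Real.sinh ρ = Real.sinh ρ ^ (2*n) := by
            rw [← pow_succ]
            congr 1
            omega
          rw [eq_div_iff hsρ, ← hps]
          ring
      rw [hred]
      push_cast
      field_simp
      ring

lemma tendsto_evalL_lo (n : ℕ) (r : List Mono) (hr : ∀ m ∈ r, Lo n m.2) :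
    Tendsto (fun ρ : ℝ => evalL r ρ / (ρ ^ n * Real.exp ((n:ℕ) * ρ))) atTop (nhds 0) := by
  induction r with
  | nil => simpa using tendsto_const_nhds
  | cons m r ih =>
      have h1 := tendsto_mono_div m.1 m.2.1 n m.2.2 (hr m List.mem_cons_self)
      have h2 := ih (fun m' hm' => hr m' (List.mem_cons_of_mem _ hm'))
      have := h1.add h2
      simp only [add_zero] at this
      refine this.congr (fun ρ => ?_)
      rw [evalL_cons, add_div]
      rfl

lemma lead_tendsto (c : ℝ) (n : ℕ) (r : List Mono) (hr : ∀ m ∈ r, Lo n m.2) :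
    Tendsto (fun ρ : ℝ => evalL ((c, n, (n:ℤ)) :: r) ρ / (ρ ^ n * Real.exp ((n:ℕ) * ρ)))
      atTop (nhds c) := by
  have htail := tendsto_evalL_lo n r hr
  have hconst : Tendsto (fun _ : ℝ => c) atTop (nhds c) := tendsto_const_nhds
  have := hconst.add htail
  simp only [add_zero] at this
  refine this.congr' ?_
  filter_upwards [eventually_gt_atTop (0:ℝ)] with ρ hρ
  rw [evalL_cons, add_div]
  congr 1
  unfold evalM
  have h1 : ρ ^ n ≠ 0 := pow_ne_zero _ (ne_of_gt hρ)
  have h2 : Real.exp ((n:ℕ) * ρ) ≠ 0 := Real.exp_ne_zero _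
  push_cast
  field_simp

end GaussRatio

open GaussRatio in
set_option maxHeartbeats 1000000 in
theorem iterated_sinh_deriv_gaussian_ratio (n : ℕ) (t : ℝ) (ht : 0 < t) :
    Tendsto (fun ρ : ℝ =>
        (t * Real.sinh ρ *
            (fun f : ℝ → ℝ => fun ρ : ℝ => -(deriv f ρ) / Real.sinh ρ)^[n + 1]
              (fun ρ : ℝ => Real.exp (-ρ ^ 2 / (2 * t))) ρ) /
          (ρ * (fun f : ℝ → ℝ => fun ρ : ℝ => -(deriv f ρ) / Real.sinh ρ)^[n]
              (fun ρ : ℝ => Real.exp (-ρ ^ 2 / (2 * t))) ρ))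
      atTop (nhds 1) := by
  have hL : (fun f : ℝ → ℝ => fun ρ : ℝ => -(deriv f ρ) / Real.sinh ρ) = Lop := rfl
  have hFg : (fun ρ : ℝ => Real.exp (-ρ ^ 2 / (2 * t))) = Fg t := rfl
  rw [hL, hFg]
  obtain ⟨r₁, hr₁, h₁⟩ := rep t ht n
  obtain ⟨r₂, hr₂, h₂⟩ := rep t ht (n+1)
  set c₁ : ℝ := (2 * t)⁻¹ ^ n with hc₁
  have hc₁pos : 0 < c₁ := pow_pos (by positivity) n
  have hd₁ := lead_tendsto c₁ n r₁ hr₁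
  have hd₂ := lead_tendsto ((2 * t)⁻¹ ^ (n+1)) (n+1) r₂ hr₂
  have hN := hd₂.const_mul t
  have hDen := tendsto_sinh_exp_neg.mul hd₁
  have hne : (1/2 : ℝ) * c₁ ≠ 0 := by positivity
  have hlim := hN.div hDen hne
  have hone : t * (2 * t)⁻¹ ^ (n+1) / ((1/2) * c₁) = 1 := by
    rw [hc₁, pow_succ, mul_inv]
    field_simp
  rw [hone] at hlim
  refine hlim.congr' ?_
  have hev := hd₁.eventually (eventually_gt_nhds hc₁pos)
  filter_upwards [eventually_gt_atTop (0:ℝ), hev] with ρ hρ hpos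
  have hDpos : (0:ℝ) < ρ ^ n * Real.exp ((n:ℕ) * ρ) := by positivity
  have hS₁pos : 0 < evalL ((c₁, n, (n:ℤ)) :: r₁) ρ := by
    have := mul_pos hpos hDpos
    rwa [div_mul_cancel₀ _ (ne_of_gt hDpos)] at this
  rw [h₁ ρ hρ, h₂ ρ hρ]
  have hsρ : Real.sinh ρ ≠ 0 := ne_of_gt (by positivity)
  have hF : Fg t ρ ≠ 0 := Real.exp_ne_zero _
  have hexp1 : Real.exp (((n:ℕ)+1 : ℕ) * ρ) = Real.exp ((n:ℕ) * ρ) * Real.exp ρ := by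
    push_cast
    rw [← Real.exp_add]
    ring_nf
  have hexpneg : Real.exp (-ρ) * Real.exp ρ = 1 := by rw [← Real.exp_add]; simp
  have hS₁ : evalL ((c₁, n, (n:ℤ)) :: r₁) ρ ≠ 0 := ne_of_gt hS₁pos
  have he1 : Real.exp ((n:ℕ) * ρ) ≠ 0 := Real.exp_ne_zero _
  have he2 : Real.exp ρ ≠ 0 := Real.exp_ne_zero _
  have hρn : ρ ^ n ≠ 0 := pow_ne_zero _ (ne_of_gt hρ)
  simp only [Pi.div_apply]
  rw [hexp1, Real.exp_neg]
  set S1 := evalL ((c₁, n, (n:ℤ)) :: r₁) ρ with hS1def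
  set S2 := evalL (((2 * t)⁻¹ ^ (n + 1), n + 1, ((n+1 : ℕ) : ℤ)) :: r₂) ρ with hS2def
  have hFne : Fg t ρ ≠ 0 := hF
  field_simp
  ring
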